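/- Let A : [0,1] → Matₙ(ℝ) be a differentiable family of symmetric positive definite matrices, and suppose there is M > 0 such that |ξᵀ A'(r) ξ| ≤ M ξᵀ A(r) ξ for every r ∈ [0,1] and ξ ∈ ℝⁿ. Then |d/dr (log det A(r))| ≤ n M for every r ∈ [0,1]. -/

import Mathlib

open Matrix

lemma det_deriv_aux {n : ℕ} (A A' : ℝ → Matrix (Fin n) (Fin n) ℝ) (r : ℝ)
    (h : ∀ i j, HasDerivAt (fun t => A t i j) (A' r i j) r) :
    HasDerivAt (fun t => (A t).det)
      (∑ j, ((A r).updateCol j (fun i => A' r i j)).det) r := by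
  have key : HasDerivAt (fun t => (A t).det)
      (∑ σ : Equiv.Perm (Fin n), ((Equiv.Perm.sign σ : ℤ) : ℝ) *
        (∑ j, (∏ i ∈ Finset.univ.erase j, A r (σ i) i) • A' r (σ j) j)) r := by
    simp only [Matrix.det_apply']
    exact HasDerivAt.fun_sum fun σ _ =>
      (HasDerivAt.fun_finsetProd fun i _ => h (σ i) i).const_mul _
  convert key using 1
  simp only [Finset.mul_sum]
  rw [Finset.sum_comm]
  refine Finset.sum_congr rfl fun j _ => ?_
  rw [Matrix.det_apply']
  refine Finset.sum_congr rfl fun σ _ => ?_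
  congr 1
  rw [← Finset.mul_prod_erase Finset.univ _ (Finset.mem_univ j),
    Matrix.updateCol_apply, if_pos rfl, smul_eq_mul, mul_comm]
  congr 1
  exact Finset.prod_congr rfl fun i hi => by
    rw [Matrix.updateCol_apply, if_neg (Finset.ne_of_mem_erase hi)]

lemma sum_det_update_aux {n : ℕ} (B C : Matrix (Fin n) (Fin n) ℝ) :
    ∑ j, (B.updateCol j (fun i => C i j)).det = (B.adjugate * C).trace := by
  simp only [Matrix.trace, Matrix.diag_apply, Matrix.mul_apply]
  refine Finset.sum_congr rfl fun j _ => ?_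
  rw [← Matrix.cramer_apply, Matrix.cramer_eq_adjugate_mulVec]
  simp [Matrix.mulVec, dotProduct]

lemma trace_bound_aux {n : ℕ} (B B' : Matrix (Fin n) (Fin n) ℝ) (hB : B.PosDef)
    (M : ℝ) (hbd : ∀ ξ : Fin n → ℝ, |ξ ⬝ᵥ B'.mulVec ξ| ≤ M * (ξ ⬝ᵥ B.mulVec ξ)) :
    |(B⁻¹ * B').trace| ≤ n * M := by
  classical
  have hH := hB.isHermitian
  set U : Matrix (Fin n) (Fin n) ℝ := (Matrix.IsHermitian.eigenvectorUnitary hH : Matrix (Fin n) (Fin n) ℝ) with hU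
  set lam := hH.eigenvalues with hlam
  have hlampos : ∀ j, 0 < lam j := fun j => hB.eigenvalues_pos j
  have hUstar : star U * U = 1 := Matrix.mem_unitaryGroup_iff'.mp (Matrix.IsHermitian.eigenvectorUnitary hH).2
  have hUU : U * star U = 1 := Matrix.mem_unitaryGroup_iff.mp (Matrix.IsHermitian.eigenvectorUnitary hH).2
  have hdiag : (Matrix.diagonal ((RCLike.ofReal : ℝ → ℝ) ∘ lam)) = Matrix.diagonal lam := by
    congr 1
  have hspec : B = U * Matrix.diagonal lam * star U := by
    rw [← hdiag]; exact hH.spectral_theorem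
  have h1 : Matrix.diagonal lam * Matrix.diagonal (fun j => (lam j)⁻¹) = 1 := by
    rw [Matrix.diagonal_mul_diagonal]
    have : (fun i => lam i * (lam i)⁻¹) = fun _ => (1:ℝ) :=
      funext fun j => mul_inv_cancel₀ (hlampos j).ne'
    rw [this, Matrix.diagonal_one]
  have hinv : B⁻¹ = U * Matrix.diagonal (fun j => (lam j)⁻¹) * star U := by
    apply Matrix.inv_eq_right_inv
    rw [hspec]
    simp only [Matrix.mul_assoc]
    rw [← Matrix.mul_assoc (star U) U, hUstar, one_mul,
      ← Matrix.mul_assoc (Matrix.diagonal lam), h1, one_mul, hUU]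
  have htr : (B⁻¹ * B').trace
      = (Matrix.diagonal (fun j => (lam j)⁻¹) * (star U * B' * U)).trace := by
    rw [hinv, Matrix.trace_mul_cycle, Matrix.trace_mul_cycle,
      Matrix.trace_mul_comm (Matrix.diagonal fun j => (lam j)⁻¹)]
    simp only [Matrix.mul_assoc]
  have htr2 : (Matrix.diagonal (fun j => (lam j)⁻¹) * (star U * B' * U)).trace
      = ∑ j, (lam j)⁻¹ * (star U * B' * U) j j := by
    simp [Matrix.trace, Matrix.diag_apply, Matrix.mul_apply, Matrix.diagonal_apply,
      Finset.sum_ite_eq, Finset.mem_univ]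
  have hcol : ∀ j, (fun i => U i j) = ⇑(hH.eigenvectorBasis j) := by
    intro j; funext i; exact hH.eigenvectorUnitary_apply i j
  have hentry : ∀ j, (star U * B' * U) j j
      = (fun i => U i j) ⬝ᵥ B' *ᵥ (fun i => U i j) := by
    intro j
    simp only [Matrix.mul_apply, Matrix.star_apply, star_trivial, dotProduct,
      Matrix.mulVec, Finset.sum_mul, Finset.mul_sum]
    rw [Finset.sum_comm]
    exact Finset.sum_congr rfl fun i _ => Finset.sum_congr rfl fun k _ => by ring
  have hquad : ∀ j, (fun i => U i j) ⬝ᵥ B *ᵥ (fun i => U i j) = lam j := by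
    intro j
    rw [hcol j, hH.mulVec_eigenvectorBasis]
    have hb : (⇑(hH.eigenvectorBasis j) ⬝ᵥ ⇑(hH.eigenvectorBasis j)) = 1 := by
      have h2 : (inner ℝ (hH.eigenvectorBasis j) (hH.eigenvectorBasis j) : ℝ) = 1 := by
        rw [real_inner_self_eq_norm_sq, hH.eigenvectorBasis.orthonormal.1 j]; norm_num
      simp only [PiLp.inner_apply, RCLike.inner_apply, conj_trivial] at h2
      rw [← h2]; simp only [dotProduct]
    rw [dotProduct_smul, hb, smul_eq_mul, mul_one]
  rw [htr, htr2]
  have hbound : ∀ j, |(lam j)⁻¹ * (star U * B' * U) j j| ≤ M := by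
    intro j
    rw [abs_mul, abs_inv, abs_of_pos (hlampos j), hentry j]
    have h3 := hbd (fun i => U i j)
    rw [hquad j] at h3
    calc (lam j)⁻¹ * |(fun i => U i j) ⬝ᵥ B' *ᵥ (fun i => U i j)|
        ≤ (lam j)⁻¹ * (M * lam j) := by
          exact mul_le_mul_of_nonneg_left h3 (inv_nonneg.mpr (hlampos j).le)
      _ = M := by rw [mul_comm M, ← mul_assoc, inv_mul_cancel₀ (hlampos j).ne', one_mul]
  calc |∑ j, (lam j)⁻¹ * (star U * B' * U) j j|
      ≤ ∑ j, |(lam j)⁻¹ * (star U * B' * U) j j| := Finset.abs_sum_le_sum_abs _ _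
    _ ≤ ∑ _j : Fin n, M := Finset.sum_le_sum fun j _ => hbound j
    _ = n * M := by simp [Finset.sum_const, Finset.card_univ, nsmul_eq_mul]

theorem stmt_14 {n : ℕ} (A A' : ℝ → Matrix (Fin n) (Fin n) ℝ)
    (hderiv : ∀ r ∈ Set.Icc (0:ℝ) 1, ∀ i j, HasDerivAt (fun t => A t i j) (A' r i j) r)
    (hpd : ∀ r ∈ Set.Icc (0:ℝ) 1, (A r).PosDef)
    (M : ℝ) (hM : 0 < M)
    (hbd : ∀ r ∈ Set.Icc (0:ℝ) 1, ∀ ξ : Fin n → ℝ,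
      |ξ ⬝ᵥ (A' r).mulVec ξ| ≤ M * (ξ ⬝ᵥ (A r).mulVec ξ)) :
    ∀ r ∈ Set.Icc (0:ℝ) 1, |deriv (fun t => Real.log (A t).det) r| ≤ n * M := by
  intro r hr
  have hd := det_deriv_aux A A' r (hderiv r hr)
  have dpos : 0 < (A r).det := (hpd r hr).det_pos
  have hlog := hd.log dpos.ne'
  rw [hlog.deriv]
  have heq : (∑ j, ((A r).updateCol j (fun i => A' r i j)).det) / (A r).det
      = ((A r)⁻¹ * A' r).trace := by
    rw [sum_det_update_aux, Matrix.inv_def, Ring.inverse_eq_inv, Matrix.smul_mul,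
      Matrix.trace_smul, smul_eq_mul, div_eq_inv_mul]
  rw [heq]
  exact trace_bound_aux (A r) (A' r) (hpd r hr) M (hbd r hr)
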